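/- arXiv:1209.0189 — 2 statements merged into one kernel-verified Lean document; each statement's English description precedes it below -/
import Mathlib

section
/- With the notation of the Csáki–Vincze transform, for every l ≥ 0 one has τ_l = min{ n ≥ 0 : T(S)_n = -2l }. In particular, each τ_l is a stopping time with respect to the natural filtration of T(S). -/
open MeasureTheory ProbabilityTheory Filter
open scoped NNReal

noncomputable section

/-- Increment `X_i = S_i - S_{i-1}` of a walk. -/
def inc (S : ℕ → ℤ) (i : ℕ) : ℤ := S i - S (i - 1)

/-- The times `τ_l` of the Csáki–Vincze construction. -/
def cvTau (S : ℕ → ℤ) : ℕ → ℕ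
  | 0 => 0
  | l + 1 => sInf {i | cvTau S l < i ∧ S (i - 1) * S (i + 1) < 0}

/-- The index `l` such that `τ_l + 1 ≤ j ≤ τ_{l+1}`, i.e. the number of
sign-change times strictly before `j`. -/
def cvEll (S : ℕ → ℤ) (j : ℕ) : ℕ :=
  ((Finset.range j).filter fun i => 0 < i ∧ S (i - 1) * S (i + 1) < 0).card

/-- The increments `X̄_j = (-1)^l X_1 X_{j+1}`, `τ_l + 1 ≤ j ≤ τ_{l+1}`. -/
def cvBarX (S : ℕ → ℤ) (j : ℕ) : ℤ := (-1) ^ cvEll S j * inc S 1 * inc S (j + 1)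

/-- The Csáki–Vincze transform `T(S)_n = X̄_1 + ⋯ + X̄_n`. -/
def CV (S : ℕ → ℤ) (n : ℕ) : ℤ := ∑ j ∈ Finset.range n, cvBarX S (j + 1)

/-- Iterates of the Csáki–Vincze transform. -/
def CViter : ℕ → (ℕ → ℤ) → ℕ → ℤ
  | 0, S => S
  | h + 1, S => CV (CViter h S)

/-- `S` is a simple random walk: `S_0 = 0` and the increments are
i.i.d. uniform on `{-1, 1}`. -/
def IsSRW {Ω : Type*} [MeasurableSpace Ω] (P : Measure Ω) (S : Ω → ℕ → ℤ) : Prop :=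
  (∀ ω, S ω 0 = 0) ∧
  (∀ ω i, S ω (i + 1) - S ω i = 1 ∨ S ω (i + 1) - S ω i = -1) ∧
  (∀ i, Measurable fun ω => S ω i) ∧
  iIndepFun (fun i ω => S ω (i + 1) - S ω i) P ∧
  (∀ i, P {ω | S ω (i + 1) - S ω i = 1} = 1 / 2) ∧
  (∀ i, P {ω | S ω (i + 1) - S ω i = -1} = 1 / 2)


section Det

variable {f : ℕ → ℤ}

/-- crossing structure -/
lemma crossing_struct (hstep : ∀ i, f (i + 1) - f i = 1 ∨ f (i + 1) - f i = -1)
    {i : ℕ} (hi : 0 < i) (hc : f (i - 1) * f (i + 1) < 0) :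
    f i = 0 ∧ f (i + 1) = -f (i - 1) ∧ (f (i - 1) = 1 ∨ f (i - 1) = -1) := by
  obtain ⟨j, rfl⟩ : ∃ j, i = j + 1 := ⟨i - 1, by omega⟩
  simp only [Nat.add_sub_cancel] at *
  have h1 := hstep j
  have h2 := hstep (j + 1)
  rcases mul_neg_iff.1 hc with ⟨hp, hn⟩ | ⟨hn, hp⟩ <;>
    refine ⟨by omega, by omega, by omega⟩

variable (hf0 : f 0 = 0)
  (hstep : ∀ i, f (i + 1) - f i = 1 ∨ f (i + 1) - f i = -1)
  (hcross : ∀ N, ∃ i, N < i ∧ f (i - 1) * f (i + 1) < 0)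

include hcross in
lemma tau_lt (l : ℕ) : cvTau f l < cvTau f (l + 1) ∧
    f (cvTau f (l + 1) - 1) * f (cvTau f (l + 1) + 1) < 0 := by
  have hne : {i | cvTau f l < i ∧ f (i - 1) * f (i + 1) < 0}.Nonempty := hcross _
  have := Nat.sInf_mem hne
  exact this

lemma tau_min {l i : ℕ} (h1 : cvTau f l < i) (h2 : f (i - 1) * f (i + 1) < 0) :
    cvTau f (l + 1) ≤ i :=
  Nat.sInf_le ⟨h1, h2⟩

include hcross in
lemma tau_strictMono : StrictMono (cvTau f) :=
  strictMono_nat_of_lt_succ fun l => (tau_lt hcross l).1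

include hcross in
lemma exists_interval (n : ℕ) : ∃ m, cvTau f m ≤ n ∧ n < cvTau f (m + 1) := by
  induction n with
  | zero => exact ⟨0, le_rfl, by have := (tau_lt hcross 0).1; simpa [cvTau] using this⟩
  | succ n ih =>
    obtain ⟨m, hm1, hm2⟩ := ih
    rcases lt_or_ge (n + 1) (cvTau f (m + 1)) with h | h
    · exact ⟨m, by omega, h⟩
    · have h' : cvTau f (m + 1) = n + 1 := by omega
      exact ⟨m + 1, h'.le, by have := (tau_lt hcross (m + 1)).1; omega⟩

include hf0 hcross in
lemma crossing_eq_tau {i : ℕ} (hc : f (i - 1) * f (i + 1) < 0) :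
    ∃ m, 1 ≤ m ∧ cvTau f m = i := by
  have hi : 0 < i := by
    rcases Nat.eq_zero_or_pos i with rfl | h
    · simp only [Nat.zero_sub, hf0, zero_mul] at hc; omega
    · exact h
  obtain ⟨m, hm1, hm2⟩ := exists_interval hcross i
  rcases eq_or_lt_of_le hm1 with h | h
  · refine ⟨m, ?_, h⟩
    rcases Nat.eq_zero_or_pos m with rfl | h'
    · exfalso; rw [← h] at hi; simp [cvTau] at hi
    · omega
  · exact absurd (tau_min h hc) (by omega)

include hf0 hstep hcross in
lemma f_tau_eq_zero (l : ℕ) : f (cvTau f l) = 0 := by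
  cases l with
  | zero => simpa [cvTau] using hf0
  | succ l =>
    have h := tau_lt hcross l
    exact (crossing_struct hstep (by omega) h.2).1

include hf0 hcross in
lemma ell_eq {l j : ℕ} (h1 : cvTau f l < j) (h2 : j ≤ cvTau f (l + 1)) :
    cvEll f j = l := by
  have hmono := tau_strictMono (f := f) hcross
  have hset : ((Finset.range j).filter fun i => 0 < i ∧ f (i - 1) * f (i + 1) < 0)
      = (Finset.Icc 1 l).image (cvTau f) := by
    ext i
    simp only [Finset.mem_filter, Finset.mem_range, Finset.mem_image, Finset.mem_Icc]
    constructor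
    · rintro ⟨hij, hip, hic⟩
      obtain ⟨m, hm1, hm2⟩ := crossing_eq_tau hf0 hcross hic
      refine ⟨m, ⟨hm1, ?_⟩, hm2⟩
      by_contra h
      have : cvTau f (l + 1) ≤ cvTau f m := hmono.le_iff_le.2 (by omega)
      omega
    · rintro ⟨m, ⟨hm1, hm2⟩, rfl⟩
      have h0 : cvTau f 0 < cvTau f m := hmono (by omega)
      have hl : cvTau f m ≤ cvTau f l := hmono.le_iff_le.2 hm2
      refine ⟨by omega, ?_, ?_⟩
      · have : cvTau f 0 = 0 := by simp [cvTau]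
        omega
      · obtain ⟨m', rfl⟩ : ∃ m', m = m' + 1 := ⟨m - 1, by omega⟩
        exact (tau_lt hcross m').2
  rw [cvEll, hset, Finset.card_image_of_injective _ hmono.injective, Nat.card_Icc]
  omega

include hf0 hstep in
lemma he1 : f 1 = 1 ∨ f 1 = -1 := by
  have h := hstep 0
  norm_num [hf0] at h
  omega

include hf0 hstep in
lemma sgn_cases (l : ℕ) : (-1 : ℤ) ^ l * f 1 = 1 ∨ (-1 : ℤ) ^ l * f 1 = -1 := by
  rcases Nat.even_or_odd l with h | h
  · rw [h.neg_one_pow]; rcases he1 hf0 hstep with h1 | h1 <;> rw [h1] <;> norm_num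
  · rw [h.neg_one_pow]; rcases he1 hf0 hstep with h1 | h1 <;> rw [h1] <;> norm_num

lemma int_sign_aux1 {s x : ℤ} (hs : s = 1 ∨ s = -1) (hx : x = 1 ∨ x = -1)
    (h : 0 ≤ s * x) : x = s := by
  rcases hs with rfl | rfl <;> omega

lemma int_sign_aux2 {s x y : ℤ} (hs : s = 1 ∨ s = -1) (h0 : 0 < s * x)
    (hst : y - x = 1 ∨ y - x = -1) : 0 ≤ s * y := by
  rcases hs with rfl | rfl <;> omega

include hf0 hstep hcross in
lemma nonneg_on (l : ℕ) (hQ : (-1 : ℤ) ^ l * f 1 * f (cvTau f l + 1) = 1) :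
    ∀ i, cvTau f l ≤ i → i ≤ cvTau f (l + 1) → 0 ≤ (-1 : ℤ) ^ l * f 1 * f i := by
  have hs : (-1 : ℤ) ^ l * f 1 = 1 ∨ (-1 : ℤ) ^ l * f 1 = -1 := sgn_cases hf0 hstep l
  set s : ℤ := (-1 : ℤ) ^ l * f 1 with hs_def
  set a := cvTau f l with ha_def
  set b := cvTau f (l + 1) with hb_def
  have hab : a < b := (tau_lt hcross l).1
  have hs0 : s ≠ 0 := by rcases hs with h | h <;> rw [h] <;> norm_num
  have main : ∀ d, a + d < b → 0 ≤ s * f (a + d) ∧ 0 ≤ s * f (a + d + 1) := by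
    intro d
    induction d with
    | zero =>
      intro _
      constructor
      · rw [show a + 0 = a by omega, f_tau_eq_zero hf0 hstep hcross l, mul_zero]
      · rw [show a + 0 + 1 = a + 1 by omega, hQ]; norm_num
    | succ d ih =>
      intro h
      rw [show a + (d + 1) = a + d + 1 by omega] at h ⊢
      obtain ⟨ih1, ih2⟩ := ih (by omega)
      refine ⟨ih2, ?_⟩
      by_cases hfi : f (a + d + 1) = 0
      · have hstep1 := hstep (a + d)
        have ha' : f (a + d) = 1 ∨ f (a + d) = -1 := by omega
        have hfa : f (a + d) = s := int_sign_aux1 hs ha' ih1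
        by_contra hneg
        push_neg at hneg
        have hc : f (a + d + 1 - 1) * f (a + d + 1 + 1) < 0 := by
          rw [show a + d + 1 - 1 = a + d by omega, hfa]
          rcases hs with h' | h' <;> rw [h'] at hneg ⊢ <;> omega
        have := tau_min (l := l) (i := a + d + 1) (by omega) hc
        omega
      · have h0 : 0 < s * f (a + d + 1) :=
          lt_of_le_of_ne ih2 (Ne.symm (mul_ne_zero hs0 hfi))
        exact int_sign_aux2 hs h0 (hstep (a + d + 1))
  intro i h1 h2
  rcases eq_or_lt_of_le h2 with h | h
  · rw [h, f_tau_eq_zero hf0 hstep hcross (l + 1), mul_zero]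
  · have := (main (i - a) (by omega)).1
    rwa [show a + (i - a) = i by omega] at this

include hf0 hstep hcross in
lemma boundary (l : ℕ) (hQ : (-1 : ℤ) ^ l * f 1 * f (cvTau f l + 1) = 1) :
    (-1 : ℤ) ^ l * f 1 * f (cvTau f (l + 1) + 1) = -1 := by
  have hs : (-1 : ℤ) ^ l * f 1 = 1 ∨ (-1 : ℤ) ^ l * f 1 = -1 := sgn_cases hf0 hstep l
  set s : ℤ := (-1 : ℤ) ^ l * f 1 with hs_def
  have hab : cvTau f l < cvTau f (l + 1) := (tau_lt hcross l).1
  have hc := (tau_lt hcross l).2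
  obtain ⟨hz, hopp, hpm⟩ := crossing_struct hstep (by omega) hc
  have hn : 0 ≤ s * f (cvTau f (l + 1) - 1) :=
    nonneg_on hf0 hstep hcross l hQ _ (by omega) (by omega)
  have hfa : f (cvTau f (l + 1) - 1) = s := int_sign_aux1 hs hpm hn
  rw [hopp, hfa]
  rcases hs with h' | h' <;> rw [h'] <;> ring

include hf0 hstep hcross in
lemma key : ∀ l, (-1 : ℤ) ^ l * f 1 * f (cvTau f l + 1) = 1 := by
  intro l
  induction l with
  | zero =>
    show (-1 : ℤ) ^ 0 * f 1 * f (cvTau f 0 + 1) = 1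
    have : cvTau f 0 = 0 := rfl
    rw [this, pow_zero, one_mul]
    rcases he1 hf0 hstep with h | h <;> rw [h] <;> norm_num
  | succ l ih =>
    have hb := boundary hf0 hstep hcross l ih
    have : (-1 : ℤ) ^ (l + 1) * f 1 * f (cvTau f (l + 1) + 1)
        = -((-1 : ℤ) ^ l * f 1 * f (cvTau f (l + 1) + 1)) := by ring
    rw [this, hb]; norm_num

lemma CV_succ (m : ℕ) : CV f (m + 1) = CV f m + cvBarX f (m + 1) :=
  Finset.sum_range_succ _ _

include hf0 hstep hcross in
lemma cv_formula (l : ℕ) : ∀ n, cvTau f l ≤ n → n ≤ cvTau f (l + 1) →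
    CV f n = CV f (cvTau f l) + (-1 : ℤ) ^ l * f 1 * f (n + 1) - 1 := by
  have hform : ∀ d, cvTau f l + d ≤ cvTau f (l + 1) →
      CV f (cvTau f l + d) = CV f (cvTau f l) + (-1 : ℤ) ^ l * f 1 * f (cvTau f l + d + 1) - 1 := by
    intro d
    induction d with
    | zero =>
      intro _
      rw [show cvTau f l + 0 = cvTau f l by omega, key hf0 hstep hcross l]
      ring
    | succ d ih =>
      intro h
      have ih' := ih (by omega)
      rw [show cvTau f l + (d + 1) = (cvTau f l + d) + 1 by omega, CV_succ, ih']
      have hell : cvEll f (cvTau f l + d + 1) = l :=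
        ell_eq hf0 hcross (by omega) (by omega)
      rw [cvBarX, hell]
      have hinc1 : inc f 1 = f 1 := by rw [inc]; norm_num [hf0]
      have hinc2 : inc f (cvTau f l + d + 1 + 1) = f (cvTau f l + d + 1 + 1) - f (cvTau f l + d + 1) := by
        rw [inc]
        norm_num
      rw [hinc1, hinc2]
      ring
  intro n h1 h2
  have := hform (n - cvTau f l) (by omega)
  rwa [show cvTau f l + (n - cvTau f l) = n by omega] at this

include hf0 hstep hcross in
lemma cv_tau_eq : ∀ l, CV f (cvTau f l) = -(2 * (l : ℤ)) := by
  intro l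
  induction l with
  | zero => show CV f 0 = _; simp [CV]
  | succ l ih =>
    have hab : cvTau f l < cvTau f (l + 1) := (tau_lt hcross l).1
    have := cv_formula hf0 hstep hcross l (cvTau f (l + 1)) (by omega) le_rfl
    rw [boundary hf0 hstep hcross l (key hf0 hstep hcross l), ih] at this
    rw [this]; push_cast; ring

include hf0 hstep hcross in
lemma cv_lb (l n : ℕ) (h : n < cvTau f (l + 1)) : -(2 * (l : ℤ)) - 1 ≤ CV f n := by
  obtain ⟨m, hm1, hm2⟩ := exists_interval hcross n
  have hml : m ≤ l := by
    by_contra hml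
    have : cvTau f (l + 1) ≤ cvTau f m := (tau_strictMono hcross).le_iff_le.2 (by omega)
    omega
  have hform := cv_formula hf0 hstep hcross m n hm1 (by omega)
  have hnn : 0 ≤ (-1 : ℤ) ^ m * f 1 * f (n + 1) :=
    nonneg_on hf0 hstep hcross m (key hf0 hstep hcross m) (n + 1) (by omega) (by omega)
  rw [cv_tau_eq hf0 hstep hcross m] at hform
  have : (m : ℤ) ≤ (l : ℤ) := by exact_mod_cast hml
  omega

include hf0 hstep hcross in
theorem main_det (l : ℕ) : cvTau f l = sInf {n : ℕ | CV f n = -(2 * (l : ℤ))} := by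
  cases l with
  | zero =>
    have h0 : (0 : ℕ) ∈ {n : ℕ | CV f n = -(2 * ((0 : ℕ) : ℤ))} := by simp [CV]
    have : sInf {n : ℕ | CV f n = -(2 * ((0 : ℕ) : ℤ))} = 0 :=
      Nat.sInf_eq_zero.2 (Or.inl h0)
    rw [this]
    rfl
  | succ l =>
    have hmem : cvTau f (l + 1) ∈ {n : ℕ | CV f n = -(2 * ((l + 1 : ℕ) : ℤ))} :=
      cv_tau_eq hf0 hstep hcross (l + 1)
    refine le_antisymm ?_ (Nat.sInf_le hmem)
    refine le_csInf ⟨_, hmem⟩ fun n hn => ?_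
    by_contra hlt
    push_neg at hlt
    have := cv_lb hf0 hstep hcross l n hlt
    have hn' : CV f n = -(2 * ((l + 1 : ℕ) : ℤ)) := hn
    push_cast at hn' this
    omega

end Det

section Cross

variable {f : ℕ → ℤ}

lemma cross_between (hstep : ∀ i, f (i + 1) - f i = 1 ∨ f (i + 1) - f i = -1) :
    ∀ k a b, b ≤ a + k → a < b → f a < 0 → 0 < f b →
      ∃ i, a < i ∧ i < b ∧ f (i - 1) * f (i + 1) < 0 := by
  intro k
  induction k with
  | zero => intro a b h1 h2 _ _; omega
  | succ k ih =>
    intro a b h1 h2 hfa hfb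
    have hst := hstep a
    have hb2 : a + 2 ≤ b := by
      by_contra hc
      have hb : b = a + 1 := by omega
      rw [hb] at hfb; omega
    have hle : f (a + 1) ≤ 0 := by omega
    rcases lt_or_eq_of_le hle with h0 | h0
    · obtain ⟨i, hi1, hi2, hi3⟩ := ih (a + 1) b (by omega) (by omega) h0 hfb
      exact ⟨i, by omega, hi2, hi3⟩
    · have hst2 := hstep (a + 1)
      rcases hst2 with h2' | h2'
      · refine ⟨a + 1, by omega, by omega, ?_⟩
        rw [show a + 1 - 1 = a by omega]
        have : f (a + 1 + 1) = 1 := by omega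
        rw [this, mul_one]; omega
      · have hfa2 : f (a + 2) < 0 := by
          rw [show a + 2 = a + 1 + 1 by omega]; omega
        have hb3 : a + 2 < b := by
          rcases eq_or_lt_of_le hb2 with h | h
          · rw [← h] at hfb; omega
          · exact h
        obtain ⟨i, hi1, hi2, hi3⟩ := ih (a + 2) b (by omega) (by omega) hfa2 hfb
        exact ⟨i, by omega, hi2, hi3⟩

lemma cross_infinite (hstep : ∀ i, f (i + 1) - f i = 1 ∨ f (i + 1) - f i = -1)
    (hub : ∀ N, ∃ n, N ≤ n ∧ 0 < f n) (hlb : ∀ N, ∃ n, N ≤ n ∧ f n < 0) :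
    ∀ N, ∃ i, N < i ∧ f (i - 1) * f (i + 1) < 0 := by
  intro N
  obtain ⟨a, ha1, ha2⟩ := hlb (N + 1)
  obtain ⟨b, hb1, hb2⟩ := hub (a + 1)
  obtain ⟨i, hi1, _, hi3⟩ := cross_between hstep b a b (by omega) (by omega) ha2 hb2
  exact ⟨i, by omega, hi3⟩

end Cross

section Prob

variable {Ω : Type*} [MeasurableSpace Ω] (P : Measure Ω) [IsProbabilityMeasure P]
  (S : Ω → ℕ → ℤ)

theorem ae_unbdd (hS : IsSRW P S) :
    ∀ᵐ ω ∂P, (¬ BddAbove (Set.range fun n => ((S ω n : ℤ) : ℝ))) ∧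
      (¬ BddBelow (Set.range fun n => ((S ω n : ℤ) : ℝ))) := by
  obtain ⟨hzero, hpm, hSm, hind, hp1, hm1⟩ := hS
  set X : ℕ → Ω → ℝ := fun k ω => ((S ω (k + 1) - S ω k : ℤ) : ℝ) with hX_def
  have hXpm : ∀ k ω, X k ω = 1 ∨ X k ω = -1 := by
    intro k ω
    rcases hpm ω k with h | h
    · left; show ((S ω (k + 1) - S ω k : ℤ) : ℝ) = 1; rw [h]; norm_num
    · right; show ((S ω (k + 1) - S ω k : ℤ) : ℝ) = -1; rw [h]; norm_num
  have hXmeas : ∀ k, StronglyMeasurable (X k) := fun k =>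
    (measurable_from_top.comp ((hSm (k + 1)).sub (hSm k))).stronglyMeasurable
  have hXind : iIndepFun X P := by
    have h := hind.comp (fun _ => (Int.cast : ℤ → ℝ)) (fun _ => measurable_from_top)
    exact h
  set F : ℕ → Ω → ℝ := fun n ω => ∑ k ∈ Finset.range (n + 1), X k ω with hF_def
  have hFg : ∀ n ω, F n ω = ((S ω (n + 1) : ℤ) : ℝ) := by
    intro n ω
    have h := Finset.sum_range_sub (fun k => ((S ω k : ℤ) : ℝ)) (n + 1)
    simp only [hzero ω, Int.cast_zero, sub_zero] at h
    calc F n ω = ∑ k ∈ Finset.range (n + 1), (((S ω (k + 1) : ℤ) : ℝ) - ((S ω k : ℤ) : ℝ)) := by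
          refine Finset.sum_congr rfl fun k _ => ?_
          rw [hX_def]; push_cast; ring
      _ = _ := h
  set ℱ := MeasureTheory.Filtration.natural X hXmeas with hFil_def
  have hXint : ∀ k, Integrable (X k) P := by
    intro k
    refine ⟨(hXmeas k).aestronglyMeasurable, HasFiniteIntegral.of_bounded (C := 1)
      (ae_of_all _ fun ω => ?_)⟩
    rcases hXpm k ω with h | h <;> rw [h] <;> norm_num
  have hint : ∀ n, Integrable (F n) P := fun n =>
    integrable_finset_sum _ fun k _ => hXint k
  have hAdapted : StronglyAdapted ℱ F := by
    intro n
    refine Finset.stronglyMeasurable_fun_sum _ fun k hk => ?_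
    exact ((Filtration.stronglyAdapted_natural hXmeas) k).mono (ℱ.mono (by
      simp only [Finset.mem_range] at hk; omega))
  have hXint0 : ∀ k, ∫ ω, X k ω ∂P = 0 := by
    intro k
    set A : Set Ω := {ω | S ω (k + 1) - S ω k = 1} with hA_def
    have hA : MeasurableSet A := ((hSm (k + 1)).sub (hSm k)) (measurableSet_singleton (1 : ℤ))
    have hXeq : X k = fun ω => A.indicator (fun _ => (2 : ℝ)) ω - 1 := by
      funext ω
      by_cases h : ω ∈ A
      · rw [Set.indicator_of_mem h]
        have h' : S ω (k + 1) - S ω k = 1 := h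
        show ((S ω (k + 1) - S ω k : ℤ) : ℝ) = 2 - 1
        rw [h']; norm_num
      · rw [Set.indicator_of_notMem h]
        have h' : S ω (k + 1) - S ω k = -1 := by
          rcases hpm ω k with h'' | h''
          · exact absurd h'' h
          · exact h''
        show ((S ω (k + 1) - S ω k : ℤ) : ℝ) = 0 - 1
        rw [h']; norm_num
    rw [hXeq]
    rw [integral_sub ((integrable_const (2 : ℝ)).indicator hA) (integrable_const 1)]
    rw [integral_indicator_const _ hA, integral_const]
    have hPA : P A = 1 / 2 := hp1 k
    rw [measureReal_def, hPA, probReal_univ]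
    rw [ENNReal.toReal_div]
    norm_num
  have hcond : ∀ n, F n =ᵐ[P] P[F (n + 1)|ℱ n] := by
    intro n
    have hsplit : F (n + 1) = F n + X (n + 1) := by
      funext ω
      show (∑ k ∈ Finset.range (n + 1 + 1), X k ω) = (∑ k ∈ Finset.range (n + 1), X k ω) + X (n + 1) ω
      exact Finset.sum_range_succ _ _
    have h1 : P[F (n + 1)|ℱ n] =ᵐ[P] P[F n|ℱ n] + P[X (n + 1)|ℱ n] := by
      rw [hsplit]; exact condExp_add (hint n) (hXint (n + 1)) _
    have h2 : P[F n|ℱ n] = F n :=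
      condExp_of_stronglyMeasurable (ℱ.le n) (hAdapted n) (hint n)
    have h3 : P[X (n + 1)|ℱ n] =ᵐ[P] fun _ => ∫ ω, X (n + 1) ω ∂P :=
      iIndepFun.condExp_natural_ae_eq_of_lt hXmeas hXind n.lt_succ_self
    filter_upwards [h1, h3] with ω hω1 hω3
    rw [hω1, Pi.add_apply, h2, hω3, hXint0 (n + 1), add_zero]
  have hmart : Martingale F ℱ P := martingale_nat hAdapted hint fun n => (hcond n)
  have hbdd : ∀ᵐ ω ∂P, ∀ i, |F (i + 1) ω - F i ω| ≤ ((1 : ℝ≥0) : ℝ) := by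
    refine ae_of_all _ fun ω i => ?_
    have heq : F (i + 1) ω - F i ω = X (i + 1) ω := by
      show (∑ k ∈ Finset.range (i + 1 + 1), X k ω) - ∑ k ∈ Finset.range (i + 1), X k ω
        = X (i + 1) ω
      rw [Finset.sum_range_succ]; ring
    rcases hXpm (i + 1) ω with h | h <;> rw [heq, h] <;> norm_num
  have hup := hmart.submartingale.bddAbove_iff_exists_tendsto hbdd
  have hiff := hmart.bddAbove_range_iff_bddBelow_range hbdd
  have hnoconv : ∀ ω, ¬ ∃ c, Filter.Tendsto (fun n => F n ω) atTop (nhds c) := by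
    rintro ω ⟨c, hc⟩
    have hC := hc.cauchySeq
    rw [Metric.cauchySeq_iff] at hC
    obtain ⟨N, hN⟩ := hC 1 one_pos
    have hd := hN (N + 1) (by omega) N le_rfl
    rw [Real.dist_eq] at hd
    have heq : F (N + 1) ω - F N ω = X (N + 1) ω := by
      show (∑ k ∈ Finset.range (N + 1 + 1), X k ω) - ∑ k ∈ Finset.range (N + 1), X k ω
        = X (N + 1) ω
      rw [Finset.sum_range_succ]; ring
    rcases hXpm (N + 1) ω with h | h <;> rw [heq, h] at hd <;> norm_num at hd
  filter_upwards [hup, hiff] with ω h1 h2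
  have hna : ¬ BddAbove (Set.range fun n => F n ω) := fun hb => hnoconv ω (h1.mp hb)
  have hnb : ¬ BddBelow (Set.range fun n => F n ω) := fun hb => hnoconv ω (h1.mp (h2.mpr hb))
  constructor
  · intro hb
    apply hna
    refine hb.mono ?_
    rintro x ⟨n, rfl⟩
    exact ⟨n + 1, (hFg n ω).symm⟩
  · intro hb
    apply hnb
    refine hb.mono ?_
    rintro x ⟨n, rfl⟩
    exact ⟨n + 1, (hFg n ω).symm⟩

theorem ae_cross (hS : IsSRW P S) :
    ∀ᵐ ω ∂P, ∀ N, ∃ i, N < i ∧ S ω (i - 1) * S ω (i + 1) < 0 := by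
  filter_upwards [ae_unbdd P S hS] with ω hω
  obtain ⟨h1, h2⟩ := hω
  have hstep : ∀ i, S ω (i + 1) - S ω i = 1 ∨ S ω (i + 1) - S ω i = -1 := hS.2.1 ω
  refine cross_infinite hstep ?_ ?_
  · intro N
    rw [not_bddAbove_iff] at h1
    set M : ℝ := ((Finset.range (N + 1)).image fun m => ((S ω m : ℤ) : ℝ)).max'
      (by simp) with hM_def
    obtain ⟨y, ⟨n, rfl⟩, hy⟩ := h1 M
    have hM0 : (0 : ℝ) ≤ M := by
      have : ((S ω 0 : ℤ) : ℝ) ∈ (Finset.range (N + 1)).image fun m => ((S ω m : ℤ) : ℝ) :=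
        Finset.mem_image_of_mem _ (by simp)
      have hle : ((S ω 0 : ℤ) : ℝ) ≤ M := Finset.le_max' _ _ this
      have h0 : ((S ω 0 : ℤ) : ℝ) = 0 := by rw [hS.1 ω]; norm_num
      linarith
    have hn : N ≤ n := by
      by_contra hn
      push_neg at hn
      have : ((S ω n : ℤ) : ℝ) ∈ (Finset.range (N + 1)).image fun m => ((S ω m : ℤ) : ℝ) :=
        Finset.mem_image_of_mem _ (by simp; omega)
      have hle : ((S ω n : ℤ) : ℝ) ≤ M := Finset.le_max' _ _ this
      simp only at hy
      linarith
    refine ⟨n, hn, ?_⟩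
    have : (0 : ℝ) < ((S ω n : ℤ) : ℝ) := lt_of_le_of_lt hM0 hy
    exact_mod_cast this
  · intro N
    rw [not_bddBelow_iff] at h2
    set M : ℝ := ((Finset.range (N + 1)).image fun m => ((S ω m : ℤ) : ℝ)).min'
      (by simp) with hM_def
    obtain ⟨y, ⟨n, rfl⟩, hy⟩ := h2 M
    have hM0 : M ≤ (0 : ℝ) := by
      have : ((S ω 0 : ℤ) : ℝ) ∈ (Finset.range (N + 1)).image fun m => ((S ω m : ℤ) : ℝ) :=
        Finset.mem_image_of_mem _ (by simp)
      have hle : M ≤ ((S ω 0 : ℤ) : ℝ) := Finset.min'_le _ _ this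
      have h0 : ((S ω 0 : ℤ) : ℝ) = 0 := by rw [hS.1 ω]; norm_num
      linarith
    have hn : N ≤ n := by
      by_contra hn
      push_neg at hn
      have : ((S ω n : ℤ) : ℝ) ∈ (Finset.range (N + 1)).image fun m => ((S ω m : ℤ) : ℝ) :=
        Finset.mem_image_of_mem _ (by simp; omega)
      have hle : M ≤ ((S ω n : ℤ) : ℝ) := Finset.min'_le _ _ this
      simp only at hy
      linarith
    refine ⟨n, hn, ?_⟩
    have : ((S ω n : ℤ) : ℝ) < 0 := lt_of_lt_of_le hy hM0
    exact_mod_cast this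

end Prob

/-- `τ_l = min{n ≥ 0 : T(S)_n = -2l}` almost surely; in particular each
`τ_l` is a stopping time with respect to the (augmented) natural filtration of `T(S)`. -/
theorem cv_tau_eq_hitting_time {Ω : Type*} [MeasurableSpace Ω] (P : Measure Ω)
    [IsProbabilityMeasure P] (S : Ω → ℕ → ℤ) (hS : IsSRW P S) :
    (∀ᵐ ω ∂P, ∀ l : ℕ, cvTau (S ω) l = sInf {n : ℕ | CV (S ω) n = -(2 * (l : ℤ))}) ∧
    ∀ l n : ℕ, ∃ A : Set Ω,
      MeasurableSet[⨆ k ∈ Set.Iic n,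
        MeasurableSpace.comap (fun ω => CV (S ω) k) inferInstance] A ∧
      P (symmDiff A {ω | cvTau (S ω) l ≤ n}) = 0 := by
  have hae := ae_cross P S hS
  constructor
  · filter_upwards [hae] with ω hω l
    exact main_det (hS.1 ω) (hS.2.1 ω) hω l
  · intro l n
    refine ⟨⋃ k ∈ Finset.range (n + 1), (fun ω => CV (S ω) k) ⁻¹' {-(2 * (l : ℤ))}, ?_, ?_⟩
    · refine Finset.measurableSet_biUnion _ fun k hk => ?_
      have hk' : k ∈ Set.Iic n := by
        simp only [Set.mem_Iic]
        exact Nat.lt_succ_iff.mp (Finset.mem_range.mp hk)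
      have hle : (MeasurableSpace.comap (fun ω => CV (S ω) k) inferInstance) ≤
          ⨆ k ∈ Set.Iic n, MeasurableSpace.comap (fun ω => CV (S ω) k) inferInstance :=
        le_iSup₂ (f := fun (k : ℕ) (_ : k ∈ Set.Iic n) =>
          MeasurableSpace.comap (fun ω => CV (S ω) k) inferInstance) k hk'
      exact hle _ ⟨{-(2 * (l : ℤ))}, measurableSet_singleton _, rfl⟩
    · refine measure_mono_null ?_ (ae_iff.mp hae)
      intro ω hωmem
      simp only [Set.mem_setOf_eq]
      intro hcr
      have hiff : (ω ∈ ⋃ k ∈ Finset.range (n + 1), (fun ω => CV (S ω) k) ⁻¹' {-(2 * (l : ℤ))})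
          ↔ cvTau (S ω) l ≤ n := by
        constructor
        · intro hmem
          simp only [Set.mem_iUnion, Set.mem_preimage, Set.mem_singleton_iff,
            Finset.mem_range, exists_prop] at hmem
          obtain ⟨k, hk, hCV⟩ := hmem
          have hmain := main_det (hS.1 ω) (hS.2.1 ω) hcr l
          rw [hmain]
          exact le_trans (Nat.sInf_le hCV) (by omega)
        · intro hτ
          have hCVτ : CV (S ω) (cvTau (S ω) l) = -(2 * (l : ℤ)) :=
            cv_tau_eq (hS.1 ω) (hS.2.1 ω) hcr l
          simp only [Set.mem_iUnion, Set.mem_preimage, Set.mem_singleton_iff,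
            Finset.mem_range, exists_prop]
          exact ⟨cvTau (S ω) l, by omega, hCVτ⟩
      rcases Set.mem_symmDiff.mp hωmem with ⟨ha, hb⟩ | ⟨hb, ha⟩
      · exact hb (hiff.mp ha)
      · exact ha (hiff.mpr hb)


end
end

section
/- For a simple random walk S, for all n ≥ 0, the σ-field generated by (T(S)_j, j ≤ n) together with σ(S_1) equals the σ-field generated by (S_j, j ≤ n+1). -/
open MeasureTheory ProbabilityTheory Filter

noncomputable section

lemma cvEll_congr {S S' : ℕ → ℤ} {j : ℕ} (h : ∀ i ≤ j, S i = S' i) :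
    cvEll S j = cvEll S' j := by
  unfold cvEll
  congr 1
  apply Finset.filter_congr
  intro i hi
  rw [Finset.mem_range] at hi
  rw [h (i - 1) (by omega), h (i + 1) (by omega)]

lemma CV_congr {S S' : ℕ → ℤ} {j : ℕ} (h : ∀ i ≤ j + 1, S i = S' i) :
    CV S j = CV S' j := by
  unfold CV
  refine Finset.sum_congr rfl fun k hk => ?_
  rw [Finset.mem_range] at hk
  unfold cvBarX inc
  simp only [Nat.add_sub_cancel, Nat.sub_self]
  rw [cvEll_congr (fun i hi => h i (by omega)),
    h 1 (by omega), h 0 (by omega), h (k + 1 + 1) (by omega), h (k + 1) (by omega)]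

lemma recon_eq (S : ℕ → ℤ) (h0 : S 0 = 0) (h1 : S 1 - S 0 = 1 ∨ S 1 - S 0 = -1) (m : ℕ) :
    S (m + 2) = S (m + 1) +
      (-1) ^ (cvEll S (m + 1)) * S 1 * (CV S (m + 1) - CV S m) := by
  have hCV : CV S (m + 1) - CV S m = cvBarX S (m + 1) := by
    unfold CV
    rw [Finset.sum_range_succ]
    ring
  rw [hCV]
  unfold cvBarX inc
  have hm : m + 1 + 1 - 1 = m + 1 := rfl
  rw [hm, h0]
  have h1' : S 1 * S 1 = 1 := by
    have : S 1 = 1 ∨ S 1 = -1 := by omega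
    rcases this with h | h <;> rw [h] <;> norm_num
  have hp : ((-1 : ℤ)) ^ (cvEll S (m + 1)) * ((-1 : ℤ)) ^ (cvEll S (m + 1)) = 1 := by
    rw [← pow_add]
    exact Even.neg_one_pow ⟨_, rfl⟩
  linear_combination (S (m + 1) - S (m + 1 + 1)) * (S 1 * S 1) * hp +
    (S (m + 1) - S (m + 1 + 1)) * h1'

/-- If each coordinate `f · i`, `i < k`, generates a sub-σ-algebra of `m`, then so does
any function of the vector `(f · 0, …, f · (k-1))`. -/
lemma comap_vec_le {Ω : Type*} (m : MeasurableSpace Ω) (k : ℕ) (g : (Fin k → ℤ) → ℤ)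
    (f : Ω → ℕ → ℤ)
    (h : ∀ i : Fin k, MeasurableSpace.comap (fun ω => f ω (i : ℕ)) inferInstance ≤ m) :
    MeasurableSpace.comap (fun ω => g (fun i => f ω (i : ℕ))) inferInstance ≤ m := by
  have heq : (fun ω => g fun i => f ω (i : ℕ)) = g ∘ (fun ω (i : Fin k) => f ω (i : ℕ)) := rfl
  rw [heq, ← MeasurableSpace.comap_comp]
  refine le_trans (MeasurableSpace.comap_mono ((measurable_of_countable g).comap_le)) ?_
  rw [show (MeasurableSpace.pi : MeasurableSpace (Fin k → ℤ)) =
    ⨆ i : Fin k, MeasurableSpace.comap (fun b : Fin k → ℤ => b i) inferInstance from rfl,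
    MeasurableSpace.comap_iSup]
  exact iSup_le fun i => by rw [MeasurableSpace.comap_comp]; exact h i

/-- `σ(T(S)_j, j ≤ n) ∨ σ(S_1) = σ(S_j, j ≤ n + 1)`. -/
theorem cv_sigma_sup_first_eq {Ω : Type*} [MeasurableSpace Ω] (P : Measure Ω)
    [IsProbabilityMeasure P] (S : Ω → ℕ → ℤ) (hS : IsSRW P S) (n : ℕ) :
    (⨆ j ∈ Set.Iic n, MeasurableSpace.comap (fun ω => CV (S ω) j) inferInstance) ⊔
        MeasurableSpace.comap (fun ω => S ω 1) inferInstance =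
      ⨆ j ∈ Set.Iic (n + 1), MeasurableSpace.comap (fun ω => S ω j) inferInstance := by
  have hRj : ∀ j, j ≤ n + 1 →
      MeasurableSpace.comap (fun ω => S ω j) inferInstance ≤
        ⨆ j ∈ Set.Iic (n + 1), MeasurableSpace.comap (fun ω => S ω j) inferInstance :=
    fun j hj => le_iSup₂ (f := fun j (_ : j ∈ Set.Iic (n + 1)) =>
      MeasurableSpace.comap (fun ω => S ω j) inferInstance) j (Set.mem_Iic.mpr hj)
  have hLCV : ∀ j, j ≤ n →
      MeasurableSpace.comap (fun ω => CV (S ω) j) inferInstance ≤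
        (⨆ j ∈ Set.Iic n, MeasurableSpace.comap (fun ω => CV (S ω) j) inferInstance) ⊔
          MeasurableSpace.comap (fun ω => S ω 1) inferInstance :=
    fun j hj => le_trans (le_iSup₂ (f := fun j (_ : j ∈ Set.Iic n) =>
      MeasurableSpace.comap (fun ω => CV (S ω) j) inferInstance) j (Set.mem_Iic.mpr hj))
      le_sup_left
  refine le_antisymm (sup_le (iSup₂_le fun j hj => ?_) ?_) (iSup₂_le fun j hj => ?_)
  · -- CV measurable wrt the right side
    rw [Set.mem_Iic] at hj
    have heq : (fun ω => CV (S ω) j) =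
        (fun ω => (fun v : Fin (j + 2) → ℤ =>
          CV (fun i => if h : i < j + 2 then v ⟨i, h⟩ else 0) j) (fun i => S ω (i : ℕ))) := by
      funext ω
      exact CV_congr fun i hi => by simp [show i < j + 2 by omega]
    rw [heq]
    exact comap_vec_le _ (j + 2)
      (fun v => CV (fun i => if h : i < j + 2 then v ⟨i, h⟩ else 0) j) S
      fun i => hRj i (by have := i.2; omega)
  · exact Measurable.comap_le (Measurable.of_comap_le (hRj 1 (by omega)))
  · rw [Set.mem_Iic] at hj
    rw [← measurable_iff_comap_le]
    induction j using Nat.strong_induction_on with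
    | _ j ih =>
      match j with
      | 0 =>
        have heq : (fun ω => S ω 0) = fun _ => (0 : ℤ) := funext fun ω => hS.1 ω
        rw [heq]; exact measurable_const
      | 1 => exact Measurable.of_comap_le le_sup_right
      | (m + 2) =>
        have hrec : (fun ω => S ω (m + 2)) = fun ω =>
            S ω (m + 1) + (-1) ^ (cvEll (S ω) (m + 1)) * S ω 1 *
              (CV (S ω) (m + 1) - CV (S ω) m) :=
          funext fun ω => recon_eq (S ω) (hS.1 ω) (by simpa using hS.2.1 ω 0) m
        rw [hrec]
        refine Measurable.add (ih (m + 1) (by omega) (by omega)) (Measurable.mul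
          (Measurable.mul ?_ (Measurable.of_comap_le le_sup_right))
          (Measurable.sub (Measurable.of_comap_le (hLCV (m + 1) (by omega)))
            (Measurable.of_comap_le (hLCV m (by omega)))))
        have heq : (fun ω => ((-1 : ℤ)) ^ (cvEll (S ω) (m + 1))) =
            (fun ω => (fun v : Fin (m + 2) → ℤ =>
              ((-1 : ℤ)) ^ (cvEll (fun i => if h : i < m + 2 then v ⟨i, h⟩ else 0) (m + 1)))
                (fun i => S ω (i : ℕ))) := by
          funext ω
          congr 1
          exact cvEll_congr fun i hi => by simp [show i < m + 2 by omega]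
        rw [heq]
        exact Measurable.of_comap_le (comap_vec_le _ (m + 2)
          (fun v => ((-1 : ℤ)) ^ (cvEll (fun i => if h : i < m + 2 then v ⟨i, h⟩ else 0) (m + 1)))
          S fun i =>
          Measurable.comap_le (ih (i : ℕ) (by have := i.2; omega) (by have := i.2; omega)))

end
end
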